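/- Let P ⊆ ℝⁿ be a discrete point set and p ∈ P an inner point, i.e. p lies in the interior of conv(P). Then the Voronoi cell V(p) is a polytope. -/

import Mathlib

open scoped RealInnerProductSpace
open Set

noncomputable section

abbrev E (n : ℕ) := EuclideanSpace ℝ (Fin n)

/-- `P` is discrete: every bounded set contains only finitely many points of `P`. -/
def IsDiscretePointSet {n : ℕ} (P : Set (E n)) : Prop :=
  ∀ B : Set (E n), Bornology.IsBounded B → (P ∩ B).Finite

/-- The Voronoi cell of `p` relative to `P`. -/
def voronoiCell {n : ℕ} (P : Set (E n)) (p : E n) : Set (E n) :=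
  {x | ∀ q ∈ P, dist x p ≤ dist x q}

/-- A polyhedron: a finite intersection of closed half-spaces. -/
def IsPolyhedron {n : ℕ} (S : Set (E n)) : Prop :=
  ∃ (k : ℕ) (y : Fin k → E n) (α : Fin k → ℝ),
    S = ⋂ i, {x : E n | (inner ℝ x (y i) : ℝ) ≤ α i}

/-- A polytope: a bounded polyhedron. -/
def IsPolytope {n : ℕ} (S : Set (E n)) : Prop :=
  IsPolyhedron S ∧ Bornology.IsBounded S

/-- The half-space of points at least as close to `p` as to `q`. -/
def halfSpace {n : ℕ} (p q : E n) : Set (E n) :=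
  {x : E n | (inner ℝ (x - p) (q - p) : ℝ) ≤ (1/2) * ‖q - p‖^2}

/-- The conic hull: all nonnegative combinations of finitely many elements of `M`. -/
def coneHull {n : ℕ} (M : Set (E n)) : Set (E n) :=
  {x | ∃ (k : ℕ) (v : Fin k → E n) (c : Fin k → ℝ),
    (∀ i, v i ∈ M) ∧ (∀ i, 0 ≤ c i) ∧ x = ∑ i, c i • v i}

/-- The direction cone of `p`: the conic hull of `P - p`. -/
def dirCone {n : ℕ} (P : Set (E n)) (p : E n) : Set (E n) :=
  coneHull ((fun q => q - p) '' P)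

/-- A cone is finitely generated if it is the conic hull of finitely many vectors. -/
def FinitelyGeneratedCone {n : ℕ} (C : Set (E n)) : Prop :=
  ∃ (k : ℕ) (v : Fin k → E n), C = coneHull (Set.range v)

/-- `q` is Voronoi relevant for `p`: dropping `halfSpace p q` strictly enlarges the
intersection defining the Voronoi cell. -/
def VoronoiRelevant {n : ℕ} (P : Set (E n)) (p q : E n) : Prop :=
  (⋂ r ∈ P \ {p}, halfSpace p r) ⊂ ⋂ r ∈ P \ {p, q}, halfSpace p r

lemma mem_halfSpace_iff {n : ℕ} (p q x : E n) :
    x ∈ halfSpace p q ↔ dist x p ≤ dist x q := by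
  have hexp : ‖x - q‖ ^ 2 = ‖x - p‖ ^ 2 - 2 * (inner ℝ (x - p) (q - p) : ℝ) + ‖q - p‖ ^ 2 := by
    have h : x - q = (x - p) - (q - p) := by abel
    rw [h, norm_sub_sq_real]
  have h1 : (0:ℝ) ≤ ‖x - p‖ := norm_nonneg _
  have h2 : (0:ℝ) ≤ ‖x - q‖ := norm_nonneg _
  simp only [halfSpace, Set.mem_setOf_eq, dist_eq_norm]
  constructor
  · intro h
    nlinarith [hexp, sq_nonneg (‖x - p‖ - ‖x - q‖), sq_nonneg (‖x - p‖ + ‖x - q‖)]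
  · intro h
    nlinarith [hexp, sq_nonneg (‖x - p‖ - ‖x - q‖), sq_nonneg (‖x - p‖ + ‖x - q‖)]

theorem stmt5 {n : ℕ} (P : Set (E n)) (hP : IsDiscretePointSet P) (p : E n) (hp : p ∈ P)
    (hin : p ∈ interior (convexHull ℝ P)) :
    IsPolytope (voronoiCell P p) := by
  rw [mem_interior_iff_mem_nhds, Metric.mem_nhds_iff] at hin
  obtain ⟨ε, hε, hball⟩ := hin
  -- In every unit direction there is a point of P with definite positive inner product.
  have key : ∀ u : E n, ∃ q : E n, ‖u‖ = 1 → q ∈ P ∧ ε/2 ≤ (inner ℝ u (q - p) : ℝ) := by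
    intro u
    by_cases hu : ‖u‖ = 1
    · have hmem : p + (ε/2) • u ∈ convexHull ℝ P := by
        apply hball
        simp only [Metric.mem_ball, dist_eq_norm, add_sub_cancel_left, norm_smul,
          Real.norm_eq_abs, hu, mul_one, abs_of_pos (by linarith : (0:ℝ) < ε/2)]
        linarith
      rw [convexHull_eq] at hmem
      obtain ⟨ι, t, w, z, hw0, hw1, hzP, hcm⟩ := hmem
      rw [Finset.centerMass_eq_of_sum_1 _ _ hw1] at hcm
      have hkey : ∃ r ∈ P, ε/2 ≤ (inner ℝ u (r - p) : ℝ) := by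
        by_contra hcon
        push_neg at hcon
        have hsum : (ε/2 : ℝ) = ∑ i ∈ t, w i * (inner ℝ u (z i - p) : ℝ) := by
          have hvec : ((ε/2) • u : E n) = ∑ i ∈ t, w i • (z i - p) := by
            have : ∑ i ∈ t, w i • (z i - p) = (∑ i ∈ t, w i • z i) - (∑ i ∈ t, w i) • p := by
              rw [Finset.sum_smul]
              rw [← Finset.sum_sub_distrib]
              exact Finset.sum_congr rfl fun i _ => smul_sub _ _ _
            rw [this, hw1, hcm, one_smul]
            abel
          calc (ε/2 : ℝ) = (inner ℝ u ((ε/2) • u) : ℝ) := by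
                rw [real_inner_smul_right, real_inner_self_eq_norm_sq, hu]; ring
            _ = ∑ i ∈ t, w i * (inner ℝ u (z i - p) : ℝ) := by
                rw [hvec, inner_sum]
                exact Finset.sum_congr rfl fun i _ => real_inner_smul_right _ _ _
        have hexpos : ∃ i ∈ t, 0 < w i := by
          by_contra hno
          push_neg at hno
          have : ∑ i ∈ t, w i ≤ 0 := Finset.sum_nonpos hno
          linarith [hw1 ▸ this]
        obtain ⟨i₀, hi₀, hwi₀⟩ := hexpos
        have hlt : ∑ i ∈ t, w i * (inner ℝ u (z i - p) : ℝ) < ∑ i ∈ t, w i * (ε/2) := by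
          apply Finset.sum_lt_sum
          · intro i hi
            exact mul_le_mul_of_nonneg_left (hcon _ (hzP i hi)).le (hw0 i hi)
          · exact ⟨i₀, hi₀, mul_lt_mul_of_pos_left (hcon _ (hzP i₀ hi₀)) hwi₀⟩
        rw [← Finset.sum_mul, hw1, one_mul] at hlt
        linarith [hsum ▸ hlt]
      obtain ⟨r, hrP, hr⟩ := hkey
      exact ⟨r, fun _ => ⟨hrP, hr⟩⟩
    · exact ⟨0, fun h => absurd h hu⟩
  choose q hq using key
  -- compactness of the sphere gives a finite set of directions
  have hScompact : IsCompact (Metric.sphere (0 : E n) 1) := isCompact_sphere 0 1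
  set U : Metric.sphere (0 : E n) 1 → Set (E n) :=
    fun u => {v | ε/4 < (inner ℝ v (q u.val - p) : ℝ)} with hU
  have hUopen : ∀ u, IsOpen (U u) := fun u =>
    isOpen_lt continuous_const (Continuous.inner continuous_id continuous_const)
  have hcover : Metric.sphere (0 : E n) 1 ⊆ ⋃ u, U u := by
    intro v hv
    have hv1 : ‖v‖ = 1 := by simpa [mem_sphere_zero_iff_norm] using hv
    have := (hq v hv1).2
    exact Set.mem_iUnion.2 ⟨⟨v, hv⟩, by simp only [hU, Set.mem_setOf_eq]; linarith⟩
  obtain ⟨t, ht⟩ := hScompact.elim_finite_subcover U hUopen hcover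
  set M : ℝ := ((t.sup fun u => ‖q u.val - p‖₊ : NNReal) : ℝ) with hMdef
  have hM : ∀ u ∈ t, ‖q u.val - p‖ ≤ M := by
    intro u hu
    have h := Finset.le_sup (f := fun u : Metric.sphere (0 : E n) 1 => ‖q u.val - p‖₊) hu
    calc ‖q u.val - p‖ = ((‖q u.val - p‖₊ : NNReal) : ℝ) := (coe_nnnorm _).symm
      _ ≤ M := NNReal.coe_le_coe.2 h
  have hM0 : 0 ≤ M := NNReal.coe_nonneg _
  set R : ℝ := 2*M^2/ε + 1 with hRdef
  have hR1 : 1 ≤ R := by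
    have h0 : 0 ≤ 2*M^2/ε := div_nonneg (by positivity) hε.le
    rw [hRdef]
    linarith
  have hR0 : 0 < R := by linarith
  -- any point satisfying the half-space conditions from t is within R of p
  have hbound : ∀ x : E n, (∀ u ∈ t, x ∈ halfSpace p (q u.val)) → ‖x - p‖ ≤ R := by
    intro x hx
    by_cases hxp : x = p
    · simp [hxp]; linarith
    · have hnx : 0 < ‖x - p‖ := norm_pos_iff.2 (sub_ne_zero.2 hxp)
      set u : E n := ‖x - p‖⁻¹ • (x - p) with hudef
      have hu1 : ‖u‖ = 1 := by
        rw [hudef, norm_smul, Real.norm_eq_abs, abs_of_pos (inv_pos.2 hnx),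
          inv_mul_cancel₀ hnx.ne']
      have huS : u ∈ Metric.sphere (0 : E n) 1 := by
        simpa [mem_sphere_zero_iff_norm] using hu1
      have hu' := ht huS
      rw [Set.mem_iUnion₂] at hu'
      obtain ⟨u₀, hu₀t, hu₀⟩ := hu'
      simp only [hU, Set.mem_setOf_eq] at hu₀
      have hinner : (inner ℝ u (q u₀.val - p) : ℝ)
          = ‖x - p‖⁻¹ * (inner ℝ (x - p) (q u₀.val - p) : ℝ) := by
        rw [hudef]; exact real_inner_smul_left _ _ _
      rw [hinner] at hu₀
      have hhs := hx u₀ hu₀t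
      simp only [halfSpace, Set.mem_setOf_eq] at hhs
      have hMle := hM u₀ hu₀t
      have hsq : ‖q u₀.val - p‖^2 ≤ M^2 := by nlinarith [norm_nonneg (q u₀.val - p)]
      have hinv : ‖x - p‖ * ‖x - p‖⁻¹ = 1 := mul_inv_cancel₀ hnx.ne'
      have hstep : ‖x - p‖ * (ε/4) < (inner ℝ (x - p) (q u₀.val - p) : ℝ) := by
        nlinarith [mul_lt_mul_of_pos_left hu₀ hnx]
      have : ‖x - p‖ * ε < 2 * M^2 := by nlinarith
      have hlt : ‖x - p‖ < 2*M^2/ε := (lt_div_iff₀ hε).2 (by linarith)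
      rw [hRdef]; linarith
  -- the finite set of relevant points
  have hFfin : (P ∩ Metric.closedBall p (2*R)).Finite :=
    hP _ Metric.isBounded_closedBall
  set F : Set (E n) := P ∩ Metric.closedBall p (2*R) with hFdef
  have hqF : ∀ u ∈ t, q u.val ∈ F := by
    intro u hu
    have hu1 : ‖u.val‖ = 1 := by simpa [mem_sphere_zero_iff_norm] using u.2
    obtain ⟨h1, h2⟩ := hq u.val hu1
    have hq_norm : ε/2 ≤ ‖q u.val - p‖ := by
      have := real_inner_le_norm u.val (q u.val - p)
      rw [hu1, one_mul] at this
      linarith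
    have hMε : ε/2 ≤ M := le_trans hq_norm (hM u hu)
    have h4 : M * ε ≤ 2*M^2 := by nlinarith
    have hM2R : M ≤ 2*M^2/ε := (le_div_iff₀ hε).2 h4
    have hle : ‖q u.val - p‖ ≤ 2*R := by
      have h5 : 0 ≤ 2*M^2/ε := div_nonneg (by positivity) hε.le
      calc ‖q u.val - p‖ ≤ M := hM u hu
        _ ≤ 2*M^2/ε := hM2R
        _ ≤ 2*R := by rw [hRdef]; linarith
    exact ⟨h1, by simpa [Metric.mem_closedBall, dist_eq_norm] using hle⟩
  -- the main equality
  have hmain : voronoiCell P p = ⋂ r ∈ F, halfSpace p r := by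
    apply Set.Subset.antisymm
    · intro x hx
      rw [Set.mem_iInter₂]
      intro r hr
      exact (mem_halfSpace_iff _ _ _).2 (hx r hr.1)
    · intro x hx
      rw [Set.mem_iInter₂] at hx
      have hxb : ‖x - p‖ ≤ R := hbound x (fun u hu => hx _ (hqF u hu))
      intro r hr
      rw [← mem_halfSpace_iff]
      by_cases hrF : ‖r - p‖ ≤ 2*R
      · exact hx r ⟨hr, by simpa [Metric.mem_closedBall, dist_eq_norm] using hrF⟩
      · push_neg at hrF
        simp only [halfSpace, Set.mem_setOf_eq]
        have hcs := real_inner_le_norm (x - p) (r - p)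
        nlinarith [norm_nonneg (r - p), norm_nonneg (x - p)]
  have hVsub : voronoiCell P p ⊆ Metric.closedBall p R := by
    rw [hmain]
    intro x hx
    rw [Set.mem_iInter₂] at hx
    have := hbound x (fun u hu => hx _ (hqF u hu))
    simpa [Metric.mem_closedBall, dist_eq_norm] using this
  constructor
  · set F' := hFfin.toFinset with hF'def
    refine ⟨F'.card, fun i => ((F'.equivFin.symm i : E n)) - p,
      fun i => 1/2 * ‖((F'.equivFin.symm i : E n)) - p‖^2
        + (inner ℝ p (((F'.equivFin.symm i : E n)) - p) : ℝ), ?_⟩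
    rw [hmain]
    ext x
    simp only [Set.mem_iInter, Set.mem_setOf_eq]
    constructor
    · intro h i
      have hm : ((F'.equivFin.symm i : E n)) ∈ F :=
        hFfin.mem_toFinset.1 (F'.equivFin.symm i).2
      have hh2 := h _ hm
      simp only [halfSpace, Set.mem_setOf_eq, inner_sub_left] at hh2
      linarith
    · intro h r hr
      have hh := h (F'.equivFin ⟨r, hFfin.mem_toFinset.2 hr⟩)
      simp only [Equiv.symm_apply_apply] at hh
      simp only [halfSpace, Set.mem_setOf_eq, inner_sub_left]
      linarith
  · exact Metric.isBounded_closedBall.subset hVsub
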